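/- Let n be an odd positive integer, K a field of characteristic 0, d ∈ K a non-square, and E an elliptic curve over K with quadratic twist E^d. Then the n-torsion over K(√d) decomposes as E(K(√d))[n] ≅ E(K)[n] ⊕ E^d(K)[n]. -/

import Mathlib

open WeierstrassCurve

/-- The `n`-torsion subgroup of an abelian group. -/
def nTorsion (n : ℕ) (G : Type*) [AddCommGroup G] : AddSubgroup G where
  carrier := {P | n • P = 0}
  zero_mem' := by simp
  add_mem' := by
    intro a b ha hb
    simp only [Set.mem_setOf_eq, smul_add] at *
    rw [ha, hb, add_zero]
  neg_mem' := by
    intro a ha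
    simp only [Set.mem_setOf_eq, smul_neg] at *
    rw [ha, neg_zero]


open WeierstrassCurve.Affine WeierstrassCurve.Affine.Point

namespace QuadTwistAux

variable {F : Type*} [Field F] [DecidableEq F]

lemma some_eq_some {W : Affine F} {x₁ y₁ x₂ y₂ : F} (hx : x₁ = x₂) (hy : y₁ = y₂)
    {h₁ : W.Nonsingular x₁ y₁} {h₂ : W.Nonsingular x₂ y₂} :
    Point.some _ _ h₁ = Point.some _ _ h₂ := by
  subst hx; subst hy; rfl

/-- Data for a quadratic-twist style scaling `(x, y) ↦ (u²x, u³y)` between two curves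
with `a₁ = a₃ = 0`. -/
structure TwistData (W1 W2 : Affine F) (u : F) : Prop where
  hu : u ≠ 0
  e1 : W1.a₁ = 0
  e3 : W1.a₃ = 0
  f1 : W2.a₁ = 0
  f3 : W2.a₃ = 0
  f2 : W2.a₂ = u ^ 2 * W1.a₂
  f4 : W2.a₄ = u ^ 4 * W1.a₄
  f6 : W2.a₆ = u ^ 6 * W1.a₆

namespace TwistData

variable {W1 W2 : Affine F} {u : F}

lemma symm (h : TwistData W1 W2 u) : TwistData W2 W1 u⁻¹ := by
  refine ⟨inv_ne_zero h.hu, h.f1, h.f3, h.e1, h.e3, ?_, ?_, ?_⟩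
  · rw [h.f2, show (u⁻¹:F)^2 * (u^2*W1.a₂) = (u⁻¹*u)^2 * W1.a₂ from by ring,
      inv_mul_cancel₀ h.hu, one_pow, one_mul]
  · rw [h.f4, show (u⁻¹:F)^4 * (u^4*W1.a₄) = (u⁻¹*u)^4 * W1.a₄ from by ring,
      inv_mul_cancel₀ h.hu, one_pow, one_mul]
  · rw [h.f6, show (u⁻¹:F)^6 * (u^6*W1.a₆) = (u⁻¹*u)^6 * W1.a₆ from by ring,
      inv_mul_cancel₀ h.hu, one_pow, one_mul]

lemma negY1 (h : TwistData W1 W2 u) (x y : F) : W1.negY x y = -y := by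
  rw [negY, h.e1, h.e3]; ring

lemma negY2 (h : TwistData W1 W2 u) (x y : F) : W2.negY x y = -y := by
  rw [negY, h.f1, h.f3]; ring

lemma equation' (h : TwistData W1 W2 u) (x y : F) : W2.Equation (u^2*x) (u^3*y) ↔ W1.Equation x y := by
  rw [equation_iff, equation_iff, h.e1, h.e3, h.f1, h.f3, h.f2, h.f4, h.f6,
    show (u^3*y)^2 + 0*(u^2*x)*(u^3*y) + 0*(u^3*y) = u^6*(y^2 + 0*x*y + 0*y) from by ring,
    show (u^2*x)^3 + u^2*W1.a₂*(u^2*x)^2 + u^4*W1.a₄*(u^2*x) + u^6*W1.a₆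
      = u^6*(x^3 + W1.a₂*x^2 + W1.a₄*x + W1.a₆) from by ring]
  exact mul_right_inj' (pow_ne_zero 6 h.hu)

lemma nonsingular' (h : TwistData W1 W2 u) (x y : F) : W2.Nonsingular (u^2*x) (u^3*y) ↔ W1.Nonsingular x y := by
  rw [nonsingular_iff, nonsingular_iff, h.equation', h.e1, h.e3, h.f1, h.f3, h.f2, h.f4]
  refine and_congr_right fun _ => or_congr ?_ ?_
  · rw [zero_mul, zero_mul,
      show 3*(u^2*x)^2 + 2*(u^2*W1.a₂)*(u^2*x) + u^4*W1.a₄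
        = u^4*(3*x^2 + 2*W1.a₂*x + W1.a₄) from by ring]
    constructor
    · intro hne h0
      exact hne (by rw [← h0, mul_zero])
    · intro hne h0
      exact hne ((mul_eq_zero.mp h0.symm).resolve_left (pow_ne_zero 4 h.hu)).symm
  · rw [zero_mul, zero_mul, sub_zero, sub_zero, sub_zero, sub_zero,
      show -(u^3*y) = u^3 * (-y) from by ring]
    exact not_congr (mul_right_inj' (pow_ne_zero 3 h.hu))

lemma slope' (h : TwistData W1 W2 u) (x₁ x₂ y₁ y₂ : F) :
    W2.slope (u^2*x₁) (u^2*x₂) (u^3*y₁) (u^3*y₂) = u * W1.slope x₁ x₂ y₁ y₂ := by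
  by_cases hx : x₁ = x₂
  · subst hx
    by_cases hy : y₁ = W1.negY x₁ y₂
    · rw [slope_of_Y_eq rfl (by rw [h.negY2, hy, h.negY1]; ring),
        slope_of_Y_eq rfl hy, mul_zero]
    · have hy' : y₁ ≠ -y₂ := by rwa [h.negY1] at hy
      have hy2 : (u^3*y₁ : F) ≠ W2.negY (u^2*x₁) (u^3*y₂) := by
        rw [h.negY2]
        intro hc
        exact hy' (by
          have := mul_left_cancel₀ (pow_ne_zero 3 h.hu) (hc.trans (by ring : -(u^3*y₂) = u^3 * (-y₂)))
          exact this)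
      rw [slope_of_Y_ne rfl hy2, slope_of_Y_ne rfl hy, h.negY2, h.negY1,
        h.f1, h.e1, h.f2, h.f4,
        show (u:F)^3*y₁ - -(u^3*y₁) = u^3*(y₁ - -y₁) from by ring]
      by_cases h2 : y₁ - -y₁ = 0
      · rw [h2, mul_zero, div_zero, div_zero, mul_zero]
      · rw [← mul_div_assoc,
          div_eq_div_iff (mul_ne_zero (pow_ne_zero 3 h.hu) h2) h2]
        ring
  · have hx2 : (u^2*x₁ : F) ≠ u^2*x₂ := fun hc => hx (mul_left_cancel₀ (pow_ne_zero 2 h.hu) hc)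
    rw [slope_of_X_ne hx2, slope_of_X_ne hx,
      show (u:F)^3*y₁ - u^3*y₂ = u^3*(y₁-y₂) from by ring,
      show (u:F)^2*x₁ - u^2*x₂ = u^2*(x₁-x₂) from by ring, ← mul_div_assoc,
      div_eq_div_iff (mul_ne_zero (pow_ne_zero 2 h.hu) (sub_ne_zero.mpr hx)) (sub_ne_zero.mpr hx)]
    ring


lemma addX' (h : TwistData W1 W2 u) (x₁ x₂ l : F) :
    W2.addX (u^2*x₁) (u^2*x₂) (u*l) = u^2 * W1.addX x₁ x₂ l := by
  rw [addX, addX, h.e1, h.f1, h.f2]; ring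

lemma negAddY' (h : TwistData W1 W2 u) (x₁ x₂ y₁ l : F) :
    W2.negAddY (u^2*x₁) (u^2*x₂) (u^3*y₁) (u*l) = u^3 * W1.negAddY x₁ x₂ y₁ l := by
  rw [negAddY, negAddY, h.addX']; ring

lemma addY' (h : TwistData W1 W2 u) (x₁ x₂ y₁ l : F) :
    W2.addY (u^2*x₁) (u^2*x₂) (u^3*y₁) (u*l) = u^3 * W1.addY x₁ x₂ y₁ l := by
  rw [addY, addY, h.negY2, h.negY1, h.negAddY']; ring

/-- The scaling map on points. -/
noncomputable def pointMap (h : TwistData W1 W2 u) : W1.Point → W2.Point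
  | 0 => 0
  | .some _ _ hxy => .some _ _ ((h.nonsingular' _ _).mpr hxy)

lemma pointMap_zero (h : TwistData W1 W2 u) : h.pointMap 0 = 0 := rfl

lemma pointMap_some (h : TwistData W1 W2 u) {x y : F} (hxy : W1.Nonsingular x y) :
    h.pointMap (.some _ _ hxy) = .some _ _ ((h.nonsingular' x y).mpr hxy) := rfl

/-- The scaling map on points as a group homomorphism. -/
noncomputable def pointHom (h : TwistData W1 W2 u) : W1.Point →+ W2.Point where
  toFun := h.pointMap
  map_zero' := rfl
  map_add' := by
    rintro (_ | ⟨x₁, y₁, hP⟩) (_ | ⟨x₂, y₂, hQ⟩)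
    any_goals rfl
    by_cases hc : x₁ = x₂ ∧ y₁ = W1.negY x₂ y₂
    · rw [add_of_Y_eq hc.1 hc.2]
      have hx' : (u^2*x₁ : F) = u^2*x₂ := by rw [hc.1]
      have hy' : (u^3*y₁ : F) = W2.negY (u^2*x₂) (u^3*y₂) := by
        rw [h.negY2, hc.2, h.negY1]; ring
      exact (add_of_Y_eq hx' hy').symm
    · have himp : x₁ = x₂ → y₁ ≠ W1.negY x₂ y₂ := fun hx hy => hc ⟨hx, hy⟩
      have himp' : (u^2*x₁ : F) = u^2*x₂ → (u^3*y₁ : F) ≠ W2.negY (u^2*x₂) (u^3*y₂) := by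
        intro hx hy
        apply himp (mul_left_cancel₀ (pow_ne_zero 2 h.hu) hx)
        rw [h.negY2, show (-(u^3*y₂) : F) = u^3 * -y₂ from by ring] at hy
        rw [h.negY1]
        exact mul_left_cancel₀ (pow_ne_zero 3 h.hu) hy
      rw [add_some fun hxy => himp hxy.1 hxy.2]
      show _ = Point.some _ _ _ + Point.some _ _ _
      rw [add_some fun hxy => himp' hxy.1 hxy.2]
      exact some_eq_some (by rw [h.slope', h.addX']) (by rw [h.slope', h.addY'])

lemma pointHom_leftInv (h : TwistData W1 W2 u) (P : W1.Point) :
    h.symm.pointHom (h.pointHom P) = P := by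
  cases P with
  | zero => rfl
  | some _ _ hxy =>
    show Point.some _ _ _ = Point.some _ _ _
    refine some_eq_some ?_ ?_ <;> field_simp [h.hu]

lemma pointHom_rightInv (h : TwistData W1 W2 u) (P : W2.Point) :
    h.pointHom (h.symm.pointHom P) = P := by
  cases P with
  | zero => rfl
  | some _ _ hxy =>
    show Point.some _ _ _ = Point.some _ _ _
    refine some_eq_some ?_ ?_ <;> field_simp [h.hu]

end TwistData

section Conj

variable {K L : Type*} [Field K] [Field L] [Algebra K L]

lemma d_ne_zero {d : K} (hd : ¬ ∃ e : K, e ^ 2 = d) : d ≠ 0 :=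
  fun h0 => hd ⟨0, by rw [h0]; ring⟩

lemma s_ne_zero {d : K} (hd : ¬ ∃ e : K, e ^ 2 = d) {s : L}
    (hs : s ^ 2 = algebraMap K L d) : s ≠ 0 := by
  intro h0
  exact d_ne_zero hd ((map_eq_zero (algebraMap K L)).mp (by rw [← hs, h0]; ring))

lemma exists_conj {d : K} (hd : ¬ ∃ e : K, e ^ 2 = d) {s : L}
    (hs : s ^ 2 = algebraMap K L d) (hgen : Algebra.adjoin K {s} = ⊤) :
    ∃ σ : L →ₐ[K] L, σ s = -s := by
  have hint : IsIntegral K s :=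
    ⟨Polynomial.X ^ 2 - Polynomial.C d, Polynomial.monic_X_pow_sub_C d two_ne_zero, by
      rw [Polynomial.eval₂_sub, Polynomial.eval₂_pow, Polynomial.eval₂_X, Polynomial.eval₂_C,
        hs, sub_self]⟩
  have hirr : Irreducible (Polynomial.X ^ 2 - Polynomial.C d) :=
    X_pow_sub_C_irreducible_of_prime Nat.prime_two (fun b hb => hd ⟨b, hb⟩)
  have hmin : minpoly K s = Polynomial.X ^ 2 - Polynomial.C d :=
    (minpoly.eq_of_irreducible_of_monic hirr
      (by rw [_root_.map_sub, _root_.map_pow, Polynomial.aeval_X, Polynomial.aeval_C, hs,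
        sub_self])
      (Polynomial.monic_X_pow_sub_C d two_ne_zero)).symm
  let e : (Algebra.adjoin K ({s} : Set L)) ≃ₐ[K] L :=
    (Subalgebra.equivOfEq _ _ hgen).trans Subalgebra.topEquiv
  let pb := (Algebra.adjoin.powerBasis hint).map e
  have hpbgen : pb.gen = s := rfl
  have hroot : Polynomial.aeval (-s) (minpoly K pb.gen) = 0 := by
    rw [hpbgen, hmin, _root_.map_sub, _root_.map_pow, Polynomial.aeval_X, Polynomial.aeval_C, neg_pow,
      hs]
    ring
  refine ⟨pb.lift (-s) hroot, ?_⟩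
  have := pb.lift_gen (-s) hroot
  rwa [hpbgen] at this

lemma conj_rep {d : K} {s : L} (hs : s ^ 2 = algebraMap K L d)
    (hgen : Algebra.adjoin K {s} = ⊤) (z : L) :
    ∃ α β : K, z = algebraMap K L α + algebraMap K L β * s := by
  let Ssub : Subalgebra K L :=
    { carrier := {z | ∃ α β : K, z = algebraMap K L α + algebraMap K L β * s}
      mul_mem' := by
        rintro z w ⟨α, β, rfl⟩ ⟨γ, δ, rfl⟩
        exact ⟨α * γ + β * δ * d, α * δ + β * γ, by
          simp only [_root_.map_add, _root_.map_mul]; rw [← hs]; ring⟩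
      one_mem' := ⟨1, 0, by simp⟩
      add_mem' := by
        rintro z w ⟨α, β, rfl⟩ ⟨γ, δ, rfl⟩
        exact ⟨α + γ, β + δ, by simp only [_root_.map_add]; ring⟩
      zero_mem' := ⟨0, 0, by simp⟩
      algebraMap_mem' := fun r => ⟨r, 0, by simp⟩ }
  have hle : Algebra.adjoin K ({s} : Set L) ≤ Ssub :=
    Algebra.adjoin_le (Set.singleton_subset_iff.mpr ⟨0, 1, by simp⟩)
  rw [hgen] at hle
  exact hle Algebra.mem_top

lemma conj_indep {d : K} (hd : ¬ ∃ e : K, e ^ 2 = d) {s : L}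
    (hs : s ^ 2 = algebraMap K L d) {α β : K}
    (h0 : algebraMap K L α + algebraMap K L β * s = 0) : α = 0 ∧ β = 0 := by
  by_cases hb : β = 0
  · subst hb
    simp only [_root_.map_zero, zero_mul, add_zero] at h0
    exact ⟨(map_eq_zero (algebraMap K L)).mp h0, rfl⟩
  · exfalso
    apply hd
    refine ⟨-α / β, ?_⟩
    have hβ : algebraMap K L β ≠ 0 := fun hc => hb ((map_eq_zero _).mp hc)
    have hsval : s = algebraMap K L (-α / β) := by
      rw [map_div₀, _root_.map_neg]
      rw [eq_div_iff hβ]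
      linear_combination h0
    apply (algebraMap K L).injective
    rw [_root_.map_pow, ← hsval, hs]

end Conj

end QuadTwistAux

open Classical in
/-- Let `n` be an odd positive integer, `K` a field of characteristic `0`, `d ∈ K` a
non-square, `E : y² = x³ + ax² + bx + c` an elliptic curve over `K` with quadratic twist
`E^d : y² = x³ + d·a·x² + d²·b·x + d³·c`, and `L = K(√d)`. Then
`E(L)[n] ≅ E(K)[n] ⊕ E^d(K)[n]`. -/
theorem stmt_12 (n : ℕ) (hn : Odd n) (hpos : 0 < n) (K : Type*) [Field K] [CharZero K]
    (d : K) (hd : ¬ ∃ e : K, e ^ 2 = d) (a b c : K)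
    (E : Affine K) (hE : E = ⟨0, a, 0, b, c⟩) (hΔ : E.Δ ≠ 0)
    (Ed : Affine K) (hEd : Ed = ⟨0, d * a, 0, d ^ 2 * b, d ^ 3 * c⟩)
    (L : Type*) [Field L] [Algebra K L] (s : L) (hs : s ^ 2 = algebraMap K L d)
    (hgen : Algebra.adjoin K {s} = ⊤) :
    Nonempty (nTorsion n (Affine.Point (E.baseChange L)) ≃+
      nTorsion n E.Point × nTorsion n Ed.Point) := by
  classical
  obtain ⟨k, hk⟩ := hn
  have hdnz : d ≠ 0 := QuadTwistAux.d_ne_zero hd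
  have hsnz : s ≠ 0 := QuadTwistAux.s_ne_zero hd hs
  haveI : CharZero L := charZero_of_injective_algebraMap (algebraMap K L).injective
  obtain ⟨σ, hσ⟩ := QuadTwistAux.exists_conj hd hs hgen
  -- coefficient facts
  have ea1 : E.a₁ = 0 := by rw [hE]
  have ea3 : E.a₃ = 0 := by rw [hE]
  have ea2 : E.a₂ = a := by rw [hE]
  have ea4 : E.a₄ = b := by rw [hE]
  have ea6 : E.a₆ = c := by rw [hE]
  have ed1 : Ed.a₁ = 0 := by rw [hEd]
  have ed3 : Ed.a₃ = 0 := by rw [hEd]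
  have ed2 : Ed.a₂ = d * a := by rw [hEd]
  have ed4 : Ed.a₄ = d ^ 2 * b := by rw [hEd]
  have ed6 : Ed.a₆ = d ^ 3 * c := by rw [hEd]
  have ht : QuadTwistAux.TwistData (E.baseChange L) (Ed.baseChange L) s := by
    refine ⟨hsnz, ?_, ?_, ?_, ?_, ?_, ?_, ?_⟩
    · show algebraMap K L E.a₁ = 0; rw [ea1, _root_.map_zero]
    · show algebraMap K L E.a₃ = 0; rw [ea3, _root_.map_zero]
    · show algebraMap K L Ed.a₁ = 0; rw [ed1, _root_.map_zero]
    · show algebraMap K L Ed.a₃ = 0; rw [ed3, _root_.map_zero]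
    · show algebraMap K L Ed.a₂ = s ^ 2 * algebraMap K L E.a₂
      rw [ed2, ea2, _root_.map_mul, hs]
    · show algebraMap K L Ed.a₄ = s ^ 4 * algebraMap K L E.a₄
      rw [ed4, ea4, _root_.map_mul, _root_.map_pow, ← hs]; ring
    · show algebraMap K L Ed.a₆ = s ^ 6 * algebraMap K L E.a₆
      rw [ed6, ea6, _root_.map_mul, _root_.map_pow, ← hs]; ring
  let ι : K →ₐ[K] L := Algebra.ofId K L
  have hι : Function.Injective ι := ι.injective
  let ιE : E.Point →+ (E.baseChange L).Point := Point.map (W' := E) ι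
  let jE : Ed.Point →+ (Ed.baseChange L).Point := Point.map (W' := Ed) ι
  let τ : (E.baseChange L).Point →+ (E.baseChange L).Point := Point.map (W' := E) σ
  let tH : (E.baseChange L).Point →+ (Ed.baseChange L).Point := ht.pointHom
  let tI : (Ed.baseChange L).Point →+ (E.baseChange L).Point := ht.symm.pointHom
  let ψ : Ed.Point →+ (E.baseChange L).Point := tI.comp jE
  have hιEinj : Function.Injective ιE := Point.map_injective (W' := E) ι
  have hjEinj : Function.Injective jE := Point.map_injective (W' := Ed) ι
  have htIinj : Function.Injective tI :=
    Function.LeftInverse.injective (g := tH) (fun P => ht.pointHom_rightInv P)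
  have hψinj : Function.Injective ψ := fun x y hxy => hjEinj (htIinj hxy)
  have hσι : ∀ α : K, σ (algebraMap K L α) = algebraMap K L α := fun α => σ.commutes α
  have hσι' : ∀ α : K, σ (ι α) = ι α := fun α => σ.commutes α
  have hrep := fun z => QuadTwistAux.conj_rep hs hgen z
  have hσσ : ∀ z : L, σ (σ z) = z := by
    intro z; obtain ⟨α, β, rfl⟩ := hrep z
    rw [_root_.map_add, _root_.map_mul, hσι, hσι, hσ, _root_.map_add, _root_.map_mul, hσι, hσι,
      _root_.map_neg, hσ]
    ring
  have hσfix : ∀ z : L, σ z = z → ∃ α : K, z = algebraMap K L α := by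
    intro z hz; obtain ⟨α, β, rfl⟩ := hrep z
    rw [_root_.map_add, _root_.map_mul, hσι, hσι, hσ] at hz
    have h2 : algebraMap K L β * s = 0 := by
      have h3 : (2 : L) * (algebraMap K L β * s) = 0 := by linear_combination -hz
      rcases mul_eq_zero.mp h3 with hch | hch
      · exact absurd hch two_ne_zero
      · exact hch
    have hβ : algebraMap K L β = 0 := by
      rcases mul_eq_zero.mp h2 with hch | hch
      · exact hch
      · exact absurd hch hsnz
    exact ⟨α, by rw [hβ]; ring⟩
  have hσanti : ∀ z : L, σ z = -z → ∃ β : K, z = algebraMap K L β * s := by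
    intro z hz; obtain ⟨α, β, rfl⟩ := hrep z
    rw [_root_.map_add, _root_.map_mul, hσι, hσι, hσ] at hz
    have h2 : algebraMap K L α = 0 := by
      have h3 : (2 : L) * algebraMap K L α = 0 := by linear_combination hz
      rcases mul_eq_zero.mp h3 with hch | hch
      · exact absurd hch two_ne_zero
      · exact hch
    exact ⟨β, by rw [h2]; ring⟩
  -- point-level facts
  have hττ : ∀ v : (E.baseChange L).Point, τ (τ v) = v := by
    intro v
    cases v with
    | zero => rfl
    | some _ _ h0 => exact QuadTwistAux.some_eq_some (hσσ _) (hσσ _)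
  have hτιE : ∀ P : E.Point, τ (ιE P) = ιE P := by
    intro P
    cases P with
    | zero => rfl
    | some _ _ h0 => exact QuadTwistAux.some_eq_some (hσι _) (hσι _)
  have hτψ : ∀ Q : Ed.Point, τ (ψ Q) = -ψ Q := by
    intro Q
    cases Q with
    | zero => rfl
    | some _ _ h0 =>
      refine QuadTwistAux.some_eq_some ?_ ?_
      · rw [_root_.map_mul, _root_.map_pow, map_inv₀, hσ, hσι', inv_neg]; ring
      · rw [ht.negY1, _root_.map_mul, _root_.map_pow, map_inv₀, hσ, hσι', inv_neg]; ring
  have key2 : ∀ v : (E.baseChange L).Point, 2 • v = 0 → n • v = 0 → v = 0 := by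
    intro v hv2 hvn
    have h1 : n • v = k • (2 • v) + v := by
      rw [hk, smul_smul, add_nsmul, one_nsmul, mul_comm]
    rw [hv2, smul_zero, zero_add] at h1
    rw [← h1, hvn]
  -- surjectivity onto fixed points
  have hfixSurj : ∀ v : (E.baseChange L).Point, τ v = v → n • v = 0 →
      ∃ P : E.Point, n • P = 0 ∧ ιE P = v := by
    intro v hv hvn
    cases v with
    | zero => exact ⟨0, smul_zero _, by rw [Point.zero_def]; exact _root_.map_zero _⟩
    | some _ _ hxy =>
      obtain ⟨hx1, hy1⟩ := Point.some.inj hv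
      obtain ⟨x₀, rfl⟩ := hσfix _ hx1
      obtain ⟨y₀, rfl⟩ := hσfix _ hy1
      have h₀ : E.Nonsingular x₀ y₀ :=
        (E.baseChange_nonsingular (f := ι) hι x₀ y₀).mp hxy
      have hP : ιE (Point.some _ _ h₀) = Point.some _ _ hxy :=
        QuadTwistAux.some_eq_some rfl rfl
      refine ⟨Point.some _ _ h₀, ?_, hP⟩
      apply hιEinj
      rw [AddMonoidHom.map_nsmul, hP, hvn, _root_.map_zero]
  -- surjectivity onto anti-fixed points
  have hantiSurj : ∀ v : (E.baseChange L).Point, τ v = -v → n • v = 0 →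
      ∃ Q : Ed.Point, n • Q = 0 ∧ ψ Q = v := by
    intro v hv hvn
    cases v with
    | zero => exact ⟨0, smul_zero _, by rw [Point.zero_def]; exact _root_.map_zero _⟩
    | some _ _ hxy =>
      obtain ⟨hx1, hy1⟩ := Point.some.inj hv
      rw [ht.negY1] at hy1
      obtain ⟨x₀, rfl⟩ := hσfix _ hx1
      obtain ⟨y₀, rfl⟩ := hσanti _ hy1
      have hxc : s ^ 2 * algebraMap K L x₀ = algebraMap K L (d * x₀) := by
        rw [_root_.map_mul, ← hs]
      have hyc : s ^ 3 * (algebraMap K L y₀ * s) = algebraMap K L (d ^ 2 * y₀) := by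
        rw [_root_.map_mul, _root_.map_pow, ← hs]; ring
      have h₂ : (Ed.baseChange L).toAffine.Nonsingular (algebraMap K L (d * x₀))
          (algebraMap K L (d ^ 2 * y₀)) := by
        rw [← hxc, ← hyc]
        exact (ht.nonsingular' _ _).mpr hxy
      have h₀ : Ed.Nonsingular (d * x₀) (d ^ 2 * y₀) :=
        (Ed.baseChange_nonsingular (f := ι) hι _ _).mp h₂
      have hkey : tH (Point.some _ _ hxy) = jE (Point.some _ _ h₀) :=
        QuadTwistAux.some_eq_some hxc hyc
      have hQ : ψ (Point.some _ _ h₀) = Point.some _ _ hxy := by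
        show tI (jE (Point.some _ _ h₀)) = _
        rw [← hkey]
        exact ht.pointHom_leftInv _
      refine ⟨Point.some _ _ h₀, ?_, hQ⟩
      apply hψinj
      rw [AddMonoidHom.map_nsmul, hQ, hvn, _root_.map_zero]
  -- the homomorphism
  let G : nTorsion n E.Point × nTorsion n Ed.Point →+
      nTorsion n (Affine.Point (E.baseChange L)) :=
    { toFun := fun PQ => ⟨ιE PQ.1.1 + ψ PQ.2.1, by
        have h1 : n • (PQ.1.1 : E.Point) = 0 := PQ.1.2
        have h2 : n • (PQ.2.1 : Ed.Point) = 0 := PQ.2.2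
        show n • _ = 0
        rw [smul_add, ← AddMonoidHom.map_nsmul, ← AddMonoidHom.map_nsmul, h1, h2, _root_.map_zero,
          _root_.map_zero, add_zero]⟩
      map_zero' := by
        apply Subtype.ext
        show ιE 0 + ψ 0 = 0
        rw [_root_.map_zero, _root_.map_zero, add_zero]
      map_add' := fun P Q => by
        apply Subtype.ext
        show ιE (P.1.1 + Q.1.1) + ψ (P.2.1 + Q.2.1) = ιE P.1.1 + ψ P.2.1 + (ιE Q.1.1 + ψ Q.2.1)
        rw [_root_.map_add, _root_.map_add]
        abel }
  have hGinj : Function.Injective G := by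
    rw [injective_iff_map_eq_zero]
    rintro ⟨⟨P, hP⟩, ⟨Q, hQ⟩⟩ h0
    have h0' : ιE P + ψ Q = 0 := congrArg Subtype.val h0
    have h3 : ιE P - ψ Q = 0 := by
      have h4 := congrArg τ h0'
      rw [_root_.map_add, hτιE, hτψ, _root_.map_zero, ← sub_eq_add_neg] at h4
      exact h4
    have h2P : (2 : ℕ) • ιE P = 0 := by
      have : ιE P + ιE P = (ιE P + ψ Q) + (ιE P - ψ Q) := by abel
      rw [two_nsmul, this, h0', h3, add_zero]
    have h2Q : (2 : ℕ) • ψ Q = 0 := by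
      have : ψ Q + ψ Q = (ιE P + ψ Q) - (ιE P - ψ Q) := by abel
      rw [two_nsmul, this, h0', h3, sub_zero]
    have hnP : n • ιE P = 0 := by
      rw [← AddMonoidHom.map_nsmul, show n • P = 0 from hP, _root_.map_zero]
    have hnQ : n • ψ Q = 0 := by
      rw [← AddMonoidHom.map_nsmul, show n • Q = 0 from hQ, _root_.map_zero]
    have hPz : P = 0 := hιEinj (by rw [key2 _ h2P hnP, _root_.map_zero])
    have hQz : Q = 0 := hψinj (by rw [key2 _ h2Q hnQ, _root_.map_zero])
    exact Prod.ext (Subtype.ext hPz) (Subtype.ext hQz)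
  have hGsurj : Function.Surjective G := by
    rintro ⟨R, hR⟩
    have hnR : n • R = 0 := hR
    have hτsum : τ ((k + 1) • (R + τ R)) = (k + 1) • (R + τ R) := by
      rw [AddMonoidHom.map_nsmul, _root_.map_add, hττ, add_comm (τ R) R]
    have hτdiff : τ ((k + 1) • (R - τ R)) = -((k + 1) • (R - τ R)) := by
      rw [AddMonoidHom.map_nsmul, _root_.map_sub, hττ, ← smul_neg, neg_sub]
    have hnsum : n • ((k + 1) • (R + τ R)) = 0 := by
      rw [smul_comm, smul_add, ← AddMonoidHom.map_nsmul, hnR, _root_.map_zero, zero_add,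
        smul_zero]
    have hndiff : n • ((k + 1) • (R - τ R)) = 0 := by
      rw [smul_comm, smul_sub, ← AddMonoidHom.map_nsmul, hnR, _root_.map_zero, sub_zero,
        smul_zero]
    obtain ⟨P, hPtor, hPeq⟩ := hfixSurj _ hτsum hnsum
    obtain ⟨Q, hQtor, hQeq⟩ := hantiSurj _ hτdiff hndiff
    refine ⟨⟨⟨P, hPtor⟩, ⟨Q, hQtor⟩⟩, ?_⟩
    apply Subtype.ext
    show ιE P + ψ Q = R
    rw [hPeq, hQeq, ← smul_add, show (R + τ R) + (R - τ R) = 2 • R from by abel, smul_smul,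
      show (k + 1) * 2 = n + 1 from by omega, succ_nsmul, hnR, zero_add]
  exact ⟨(AddEquiv.ofBijective G ⟨hGinj, hGsurj⟩).symm⟩
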